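/- arXiv:2308.12204 — 2 statements merged into one kernel-verified Lean document; each statement's English description precedes it below -/
import Mathlib

section
/- Let R be a commutative ring, d_1 ≥ … ≥ d_n integers, D = diag(t^{d_1}, …, t^{d_n}), K = GL_n(R[[t]]), K₁ = {k ∈ K : k ≡ I mod t}, and let E(R) ⊆ GL_n(R) × GL_n(R) be the group of pairs (p_−, p_+) with p_− ∈ P_−, p_+ ∈ P_+ having the same Levi component. Consider the right action of E(R) on GL_n(R) × GL_n(R) by (g,h)·(p_−,p_+) = (p_−⁻¹ g, p_+⁻¹ h). Then the map (g, h) ↦ K₁ · g⁻¹ D h · K₁ induces a well-defined bijection from the set of E(R)-orbits on GL_n(R) × GL_n(R) onto the set of double cosets K₁ x K₁ with x ∈ K D K = {k D k' : k, k' ∈ K}. -/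
open Matrix

noncomputable section

/-- The inclusion `GL_n(R[[t]]) → GL_n(R((t)))`. -/
def psUnits (R : Type*) [CommRing R] (n : ℕ) :
    GL (Fin n) (PowerSeries R) →* GL (Fin n) (LaurentSeries R) :=
  Units.map ((HahnSeries.ofPowerSeries ℤ R).mapMatrix).toMonoidHom

/-- The inclusion `GL_n(R) → GL_n(R((t)))` as constant matrices. -/
def cUnits (R : Type*) [CommRing R] (n : ℕ) :
    GL (Fin n) R →* GL (Fin n) (LaurentSeries R) :=
  Units.map (((HahnSeries.ofPowerSeries ℤ R).comp (PowerSeries.C (R := R))).mapMatrix).toMonoidHom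

/-- Reduction modulo `t` of a matrix over `R[[t]]`. -/
def redMat (R : Type*) [CommRing R] (n : ℕ) :
    Matrix (Fin n) (Fin n) (PowerSeries R) →+* Matrix (Fin n) (Fin n) R :=
  (PowerSeries.constantCoeff (R := R)).mapMatrix

namespace VAux

variable {R : Type*} [CommRing R] {n : ℕ}

lemma coeff_ofPS_neg (f : PowerSeries R) {m : ℤ} (hm : m < 0) :
    (HahnSeries.ofPowerSeries ℤ R f).coeff m = 0 := by
  rw [HahnSeries.ofPowerSeries_apply]
  apply HahnSeries.embDomain_notin_range
  rintro ⟨k, hk⟩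
  have : (k : ℤ) = m := hk
  omega

lemma single_mem (m : ℤ) (r : R) (h : 0 ≤ m ∨ r = 0) :
    ∃ f : PowerSeries R, HahnSeries.ofPowerSeries ℤ R f = HahnSeries.single m r := by
  rcases h with h | rfl
  · refine ⟨PowerSeries.C (R := R) r * PowerSeries.X ^ m.toNat, ?_⟩
    rw [_root_.map_mul, HahnSeries.ofPowerSeries_C, HahnSeries.ofPowerSeries_X_pow]
    have : HahnSeries.C r = HahnSeries.single (0 : ℤ) r := rfl
    rw [this, HahnSeries.single_mul_single, zero_add, mul_one, Int.toNat_of_nonneg h]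
  · exact ⟨0, by simp [HahnSeries.single_eq_zero]⟩

lemma sandwich_coeff (a b c : ℤ) (x : HahnSeries ℤ R) :
    (HahnSeries.single a (1 : R) * x * HahnSeries.single b 1).coeff c
      = x.coeff (c - a - b) := by
  have h1 : (HahnSeries.single a (1 : R) * x * HahnSeries.single b 1).coeff (c - b + b)
      = (HahnSeries.single a (1 : R) * x).coeff (c - b) * 1 :=
    HahnSeries.coeff_mul_single_add
  have h2 : (HahnSeries.single a (1 : R) * x).coeff (c - a - b + a)
      = 1 * x.coeff (c - a - b) :=
    HahnSeries.coeff_single_mul_add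
  have e1 : c - b + b = c := by ring
  have e2 : c - a - b + a = c - b := by ring
  rw [e1] at h1
  rw [e2] at h2
  rw [h1, h2, one_mul, mul_one]

lemma coeff_zero_ofPS (f : PowerSeries R) :
    (HahnSeries.ofPowerSeries ℤ R f).coeff 0 = PowerSeries.constantCoeff (R := R) f := by
  have h := HahnSeries.ofPowerSeries_apply_coeff (Γ := ℤ) f 0
  simpa [PowerSeries.coeff_zero_eq_constantCoeff] using h

/-- Levi component w.r.t. a weight function `e`. -/
def levi (e : Fin n → ℤ) (A : Matrix (Fin n) (Fin n) R) : Matrix (Fin n) (Fin n) R :=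
  Matrix.of fun i j => if e i = e j then A i j else 0

lemma levi_apply (e : Fin n → ℤ) (A : Matrix (Fin n) (Fin n) R) (i j) :
    levi e A i j = if e i = e j then A i j else 0 := rfl

lemma levi_neg (e : Fin n → ℤ) (A : Matrix (Fin n) (Fin n) R) :
    levi (fun i => -(e i)) A = levi e A := by
  ext i j
  simp [levi_apply, neg_inj]

lemma levi_mul_levi (e : Fin n → ℤ) (A B : Matrix (Fin n) (Fin n) R)
    (hA : ∀ i j, e j < e i → A i j = 0) (hB : ∀ i j, e j < e i → B i j = 0)
    (hAB : A * B = 1) : levi e A * levi e B = 1 := by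
  ext i j
  rw [mul_apply]
  by_cases hij : e i = e j
  · have : ∀ k, levi e A i k * levi e B k j = A i k * B k j := by
      intro k
      rw [levi_apply, levi_apply]
      rcases lt_trichotomy (e i) (e k) with h | h | h
      · have hz : B k j = 0 := hB k j (hij ▸ h)
        simp [hz, h.ne, (hij ▸ h).ne']
      · simp [h, hij ▸ h]
      · have hz : A i k = 0 := hA i k h
        simp [hz, h.ne']
    simp only [this]
    rw [← mul_apply, hAB]
  · have : ∀ k, levi e A i k * levi e B k j = 0 := by
      intro k
      rw [levi_apply, levi_apply]
      by_cases h1 : e i = e k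
      · have h2 : ¬ e k = e j := fun h => hij (h1.trans h)
        simp [h2]
      · simp [h1]
    rw [Finset.sum_congr rfl fun k _ => this k, Finset.sum_const_zero]
    have : i ≠ j := fun h => hij (by rw [h])
    simp [Matrix.one_apply, this]

lemma levi_mul_levi_of_mul (e : Fin n → ℤ) (A B : Matrix (Fin n) (Fin n) R) :
    levi e (A * levi e B) = levi e A * levi e B := by
  ext i j
  rw [levi_apply, mul_apply, mul_apply]
  by_cases hij : e i = e j
  · simp only [hij, if_true]
    refine Finset.sum_congr rfl fun k _ => ?_
    simp only [levi_apply]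
    by_cases hk : e k = e j
    · simp [hk, hij.trans hk.symm]
    · simp [hk]
  · simp only [hij, if_false]
    symm
    refine Finset.sum_eq_zero fun k _ => ?_
    rw [levi_apply, levi_apply]
    by_cases h1 : e i = e k
    · have h2 : ¬ e k = e j := fun h => hij (h1.trans h)
      simp [h2]
    · simp [h1]

lemma para_mul (e : Fin n → ℤ) (A B : Matrix (Fin n) (Fin n) R)
    (hA : ∀ i j, e j < e i → A i j = 0) (hB : ∀ i j, e j < e i → B i j = 0) :
    ∀ i j, e j < e i → (A * B) i j = 0 := by
  intro i j hij
  rw [mul_apply]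
  refine Finset.sum_eq_zero fun k _ => ?_
  by_cases h : e j < e k
  · rw [hB k j h, mul_zero]
  · rw [hA i k (lt_of_le_of_lt (not_lt.mp h) hij), zero_mul]

lemma levi_para (e : Fin n → ℤ) (A : Matrix (Fin n) (Fin n) R) :
    ∀ i j, e j < e i → levi e A i j = 0 := by
  intro i j hij
  rw [levi_apply, if_neg hij.ne']

lemma coe_D_inv (d : Fin n → ℤ) (D : GL (Fin n) (LaurentSeries R))
    (hD : (D : Matrix (Fin n) (Fin n) (LaurentSeries R)) =
      Matrix.diagonal fun i => HahnSeries.single (d i) (1 : R)) :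
    ((D⁻¹ : GL (Fin n) (LaurentSeries R)) : Matrix (Fin n) (Fin n) (LaurentSeries R)) =
      Matrix.diagonal fun i => HahnSeries.single (-(d i)) (1 : R) := by
  have h1 : (Matrix.diagonal fun i => HahnSeries.single (d i) (1 : R)) *
      (Matrix.diagonal fun i => HahnSeries.single (-(d i)) (1 : R)) = 1 := by
    rw [Matrix.diagonal_mul_diagonal]
    have : (fun i => HahnSeries.single (d i) (1 : R) * HahnSeries.single (-(d i)) (1 : R))
        = fun _ => 1 := by
      funext i
      rw [HahnSeries.single_mul_single, add_neg_cancel, mul_one, HahnSeries.single_zero_one]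
    rw [this, Matrix.diagonal_one]
  have h2 : (Matrix.diagonal fun i => HahnSeries.single (-(d i)) (1 : R)) *
      (Matrix.diagonal fun i => HahnSeries.single (d i) (1 : R)) = 1 := by
    rw [Matrix.diagonal_mul_diagonal]
    have : (fun i => HahnSeries.single (-(d i)) (1 : R) * HahnSeries.single (d i) (1 : R))
        = fun _ => 1 := by
      funext i
      rw [HahnSeries.single_mul_single, neg_add_cancel, mul_one, HahnSeries.single_zero_one]
    rw [this, Matrix.diagonal_one]
  have hDE : D = ⟨Matrix.diagonal fun i => HahnSeries.single (d i) (1 : R),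
      Matrix.diagonal fun i => HahnSeries.single (-(d i)) (1 : R), h1, h2⟩ :=
    Units.ext hD
  rw [hDE]
  rfl

lemma diag_sandwich (e f : Fin n → ℤ) (M : Matrix (Fin n) (Fin n) (LaurentSeries R)) (i j : Fin n) :
    ((Matrix.diagonal fun i => HahnSeries.single (e i) (1 : R)) * M *
      (Matrix.diagonal fun i => HahnSeries.single (f i) (1 : R))) i j
    = HahnSeries.single (e i) (1 : R) * M i j * HahnSeries.single (f j) (1 : R) := by
  rw [Matrix.mul_diagonal, Matrix.diagonal_mul]

lemma conj_entry (e f : Fin n → ℤ) (q : Matrix (Fin n) (Fin n) R) (i j : Fin n) :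
    ((Matrix.diagonal fun i => HahnSeries.single (e i) (1 : R)) *
      (q.map ((HahnSeries.ofPowerSeries ℤ R).comp (PowerSeries.C (R := R)))) *
      (Matrix.diagonal fun i => HahnSeries.single (f i) (1 : R))) i j
    = HahnSeries.single (e i + f j) (q i j) := by
  rw [diag_sandwich]
  have : q.map ((HahnSeries.ofPowerSeries ℤ R).comp (PowerSeries.C (R := R))) i j
      = HahnSeries.single (0 : ℤ) (q i j) := by
    rw [Matrix.map_apply, RingHom.comp_apply, HahnSeries.ofPowerSeries_C]
    rfl
  rw [this, HahnSeries.single_mul_single, HahnSeries.single_mul_single, one_mul, mul_one,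
    add_zero]

lemma inv_para (e : Fin n → ℤ) (p : GL (Fin n) R)
    (hp : ∀ i j, e j < e i → (p : Matrix (Fin n) (Fin n) R) i j = 0) :
    ∀ i j, e j < e i →
      ((p⁻¹ : GL (Fin n) R) : Matrix (Fin n) (Fin n) R) i j = 0 := by
  intro i j hij
  rw [Matrix.coe_units_inv]
  haveI : Invertible (p : Matrix (Fin n) (Fin n) R) := p.invertible
  exact Matrix.blockTriangular_inv_of_blockTriangular (fun i j h => hp i j h) hij

/-- constant power series matrices -/
def cPS (R : Type*) [CommRing R] (n : ℕ) :
    GL (Fin n) R →* GL (Fin n) (PowerSeries R) :=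
  Units.map ((PowerSeries.C (R := R)).mapMatrix).toMonoidHom

/-- reduction mod `t` as a group hom on units -/
def rU (R : Type*) [CommRing R] (n : ℕ) :
    GL (Fin n) (PowerSeries R) →* GL (Fin n) R :=
  Units.map (redMat R n).toMonoidHom

lemma rU_coe (k : GL (Fin n) (PowerSeries R)) :
    ((rU R n k : GL (Fin n) R) : Matrix (Fin n) (Fin n) R)
      = redMat R n (k : Matrix (Fin n) (Fin n) (PowerSeries R)) := rfl

lemma redMat_apply (M : Matrix (Fin n) (Fin n) (PowerSeries R)) (i j) :
    redMat R n M i j = PowerSeries.constantCoeff (R := R) (M i j) := rfl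

lemma psUnits_cPS (g : GL (Fin n) R) : psUnits R n (cPS R n g) = cUnits R n g := by
  unfold psUnits cUnits cPS
  rw [← RingHom.mapMatrix_comp]
  rfl

lemma red_cPS (g : GL (Fin n) R) :
    redMat R n ((cPS R n g : GL (Fin n) (PowerSeries R)) : Matrix (Fin n) (Fin n) (PowerSeries R))
      = (g : Matrix (Fin n) (Fin n) R) := by
  show redMat R n ((PowerSeries.C (R := R)).mapMatrix (g : Matrix (Fin n) (Fin n) R)) = _
  refine Matrix.ext fun i j => ?_
  simp [redMat, RingHom.mapMatrix_apply]

lemma rU_cPS (g : GL (Fin n) R) : rU R n (cPS R n g) = g :=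
  Units.ext (red_cPS g)

lemma psUnits_coe (k : GL (Fin n) (PowerSeries R)) :
    ((psUnits R n k : GL (Fin n) (LaurentSeries R)) : Matrix (Fin n) (Fin n) (LaurentSeries R))
      = (k : Matrix (Fin n) (Fin n) (PowerSeries R)).map (HahnSeries.ofPowerSeries ℤ R) := rfl

lemma cUnits_coe (g : GL (Fin n) R) :
    ((cUnits R n g : GL (Fin n) (LaurentSeries R)) : Matrix (Fin n) (Fin n) (LaurentSeries R))
      = (g : Matrix (Fin n) (Fin n) R).map
          ((HahnSeries.ofPowerSeries ℤ R).comp (PowerSeries.C (R := R))) := rfl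

lemma lift_unit (x : GL (Fin n) (LaurentSeries R))
    (h1 : ∀ i j, ∃ f : PowerSeries R, HahnSeries.ofPowerSeries ℤ R f
        = (x : Matrix (Fin n) (Fin n) (LaurentSeries R)) i j)
    (h2 : ∀ i j, ∃ f : PowerSeries R, HahnSeries.ofPowerSeries ℤ R f
        = ((x⁻¹ : GL (Fin n) (LaurentSeries R)) : Matrix (Fin n) (Fin n) (LaurentSeries R)) i j) :
    ∃ k : GL (Fin n) (PowerSeries R), psUnits R n k = x ∧
      ∀ i j, PowerSeries.constantCoeff (R := R) ((k : Matrix (Fin n) (Fin n) (PowerSeries R)) i j)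
        = ((x : Matrix (Fin n) (Fin n) (LaurentSeries R)) i j).coeff 0 := by
  classical
  set φ := HahnSeries.ofPowerSeries ℤ R with hφ
  let A : Matrix (Fin n) (Fin n) (PowerSeries R) := Matrix.of fun i j => (h1 i j).choose
  let B : Matrix (Fin n) (Fin n) (PowerSeries R) := Matrix.of fun i j => (h2 i j).choose
  have hA : A.map φ = (x : Matrix (Fin n) (Fin n) (LaurentSeries R)) :=
    Matrix.ext fun i j => (h1 i j).choose_spec
  have hB : B.map φ = ((x⁻¹ : GL (Fin n) (LaurentSeries R)) : Matrix _ _ _) :=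
    Matrix.ext fun i j => (h2 i j).choose_spec
  have hinj : Function.Injective fun M : Matrix (Fin n) (Fin n) (PowerSeries R) => M.map φ := by
    intro M N h
    refine Matrix.ext fun i j => (HahnSeries.ofPowerSeries_injective (Γ := ℤ) (R := R)) ?_
    exact congrFun (congrFun (congrArg (fun M => (M : Fin n → Fin n → LaurentSeries R)) h) i) j
  have hmapmul : ∀ M N : Matrix (Fin n) (Fin n) (PowerSeries R),
      (M * N).map φ = M.map φ * N.map φ := fun M N =>
    Matrix.map_mul (f := (φ : PowerSeries R →+* LaurentSeries R))
  have hAB : A * B = 1 := by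
    apply hinj
    show (A * B).map φ = (1 : Matrix (Fin n) (Fin n) (PowerSeries R)).map φ
    rw [hmapmul, hA, hB]
    have hx : (x : Matrix (Fin n) (Fin n) (LaurentSeries R))
        * ((x⁻¹ : GL (Fin n) (LaurentSeries R)) : Matrix (Fin n) (Fin n) (LaurentSeries R)) = 1 :=
      x.mul_inv
    rw [hx, Matrix.map_one _ (map_zero φ) (map_one φ)]
  have hBA : B * A = 1 := by
    apply hinj
    show (B * A).map φ = (1 : Matrix (Fin n) (Fin n) (PowerSeries R)).map φ
    rw [hmapmul, hB, hA]
    have hx : ((x⁻¹ : GL (Fin n) (LaurentSeries R)) : Matrix (Fin n) (Fin n) (LaurentSeries R))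
        * (x : Matrix (Fin n) (Fin n) (LaurentSeries R)) = 1 :=
      x.inv_mul
    rw [hx, Matrix.map_one _ (map_zero φ) (map_one φ)]
  refine ⟨⟨A, B, hAB, hBA⟩, ?_, ?_⟩
  · apply Units.ext
    exact hA
  · intro i j
    have h0 : φ (A i j) = (x : Matrix (Fin n) (Fin n) (LaurentSeries R)) i j :=
      congrFun (congrFun (congrArg (fun M => (M : Fin n → Fin n → LaurentSeries R)) hA) i) j
    rw [← h0, hφ]
    have := HahnSeries.ofPowerSeries_apply_coeff (A i j) 0 (Γ := ℤ)
    simpa using this.symm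

end VAux

set_option maxHeartbeats 1000000 in
lemma VAux.forward (R : Type*) [CommRing R] (n : ℕ)
    (d : Fin n → ℤ)
    (D : GL (Fin n) (LaurentSeries R))
    (hD : (D : Matrix (Fin n) (Fin n) (LaurentSeries R)) =
      Matrix.diagonal fun i => HahnSeries.single (d i) (1 : R))
    (g₁ h₁ g₂ h₂ : GL (Fin n) R)
    (h : ∃ pm pp : GL (Fin n) R,
        (∀ i j : Fin n, d i > d j → (pm : Matrix (Fin n) (Fin n) R) i j = 0) ∧
        (∀ i j : Fin n, d i < d j → (pp : Matrix (Fin n) (Fin n) R) i j = 0) ∧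
        (∀ i j : Fin n, d i = d j →
          (pm : Matrix (Fin n) (Fin n) R) i j = (pp : Matrix (Fin n) (Fin n) R) i j) ∧
        g₂ = pm⁻¹ * g₁ ∧ h₂ = pp⁻¹ * h₁) :
    ∃ k₁ k₂ : GL (Fin n) (PowerSeries R),
        redMat R n (k₁ : Matrix (Fin n) (Fin n) (PowerSeries R)) = 1 ∧
        redMat R n (k₂ : Matrix (Fin n) (Fin n) (PowerSeries R)) = 1 ∧
        cUnits R n g₂⁻¹ * D * cUnits R n h₂ =
          psUnits R n k₁ * (cUnits R n g₁⁻¹ * D * cUnits R n h₁) * psUnits R n k₂ := by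
  obtain ⟨pm, pp, hpm, hpp, hlv, hg₂, hh₂⟩ := h
  have hpm' : ∀ i j, d j < d i →
      ((pm⁻¹ : GL (Fin n) R) : Matrix (Fin n) (Fin n) R) i j = 0 :=
    VAux.inv_para d pm hpm
  have hpp' : ∀ i j, d i < d j →
      ((pp⁻¹ : GL (Fin n) R) : Matrix (Fin n) (Fin n) R) i j = 0 :=
    fun i j h => VAux.inv_para (fun i => -(d i)) pp
      (fun a b hab => hpp a b (by simpa using hab)) i j (by simpa using h)
  have hL1 : VAux.levi d (pm : Matrix (Fin n) (Fin n) R) *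
      VAux.levi d ((pm⁻¹ : GL (Fin n) R) : Matrix (Fin n) (Fin n) R) = 1 :=
    VAux.levi_mul_levi d _ _ hpm hpm' pm.mul_inv
  have hL2 : VAux.levi d ((pm⁻¹ : GL (Fin n) R) : Matrix (Fin n) (Fin n) R) *
      VAux.levi d (pm : Matrix (Fin n) (Fin n) R) = 1 :=
    VAux.levi_mul_levi d _ _ hpm' hpm pm.inv_mul
  set Lu : GL (Fin n) R := ⟨VAux.levi d (pm : Matrix (Fin n) (Fin n) R),
    VAux.levi d ((pm⁻¹ : GL (Fin n) R) : Matrix (Fin n) (Fin n) R), hL1, hL2⟩ with hLudef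
  have hP1 : VAux.levi d ((pp⁻¹ : GL (Fin n) R) : Matrix (Fin n) (Fin n) R) *
      VAux.levi d (pp : Matrix (Fin n) (Fin n) R) = 1 := by
    have h := VAux.levi_mul_levi (fun i => -(d i))
      ((pp⁻¹ : GL (Fin n) R) : Matrix (Fin n) (Fin n) R) (pp : Matrix (Fin n) (Fin n) R)
      (fun a b hab => hpp' a b (by simpa using hab))
      (fun a b hab => hpp a b (by simpa using hab)) pp.inv_mul
    rwa [VAux.levi_neg, VAux.levi_neg] at h
  have hP2 : VAux.levi d (pp : Matrix (Fin n) (Fin n) R) *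
      VAux.levi d ((pp⁻¹ : GL (Fin n) R) : Matrix (Fin n) (Fin n) R) = 1 := by
    have h := VAux.levi_mul_levi (fun i => -(d i))
      (pp : Matrix (Fin n) (Fin n) R) ((pp⁻¹ : GL (Fin n) R) : Matrix (Fin n) (Fin n) R)
      (fun a b hab => hpp a b (by simpa using hab))
      (fun a b hab => hpp' a b (by simpa using hab)) pp.mul_inv
    rwa [VAux.levi_neg, VAux.levi_neg] at h
  set Lp : GL (Fin n) R := ⟨VAux.levi d (pp : Matrix (Fin n) (Fin n) R),
    VAux.levi d ((pp⁻¹ : GL (Fin n) R) : Matrix (Fin n) (Fin n) R), hP2, hP1⟩ with hLpdef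
  have hLuLp : Lu = Lp := by
    refine Units.ext (Matrix.ext fun i j => ?_)
    show VAux.levi d (pm : Matrix (Fin n) (Fin n) R) i j
      = VAux.levi d (pp : Matrix (Fin n) (Fin n) R) i j
    rw [VAux.levi_apply, VAux.levi_apply]
    by_cases h : d i = d j
    · simp [h, hlv i j h]
    · simp [h]
  have hDinv := VAux.coe_D_inv d D hD
  -- the lower-triangular conjugate
  have hcoe2 : ((pm * Lu⁻¹ : GL (Fin n) R) : Matrix (Fin n) (Fin n) R)
      = (pm : Matrix (Fin n) (Fin n) R) *
        VAux.levi d ((pm⁻¹ : GL (Fin n) R) : Matrix (Fin n) (Fin n) R) := rfl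
  have hcoe2' : ((Lu * pm⁻¹ : GL (Fin n) R) : Matrix (Fin n) (Fin n) R)
      = VAux.levi d (pm : Matrix (Fin n) (Fin n) R) *
        ((pm⁻¹ : GL (Fin n) R) : Matrix (Fin n) (Fin n) R) := rfl
  have hx2mat : ∀ i j, ((D⁻¹ * cUnits R n (pm * Lu⁻¹) * D : GL (Fin n) (LaurentSeries R))
        : Matrix (Fin n) (Fin n) (LaurentSeries R)) i j
      = HahnSeries.single (-(d i) + d j)
          (((pm : Matrix (Fin n) (Fin n) R) *
            VAux.levi d ((pm⁻¹ : GL (Fin n) R) : Matrix (Fin n) (Fin n) R)) i j) := by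
    intro i j
    have h0 : ((D⁻¹ * cUnits R n (pm * Lu⁻¹) * D : GL (Fin n) (LaurentSeries R))
          : Matrix (Fin n) (Fin n) (LaurentSeries R))
        = ((D⁻¹ : GL (Fin n) (LaurentSeries R)) : Matrix (Fin n) (Fin n) (LaurentSeries R)) *
          ((cUnits R n (pm * Lu⁻¹) : GL (Fin n) (LaurentSeries R))
            : Matrix (Fin n) (Fin n) (LaurentSeries R)) *
          (D : Matrix (Fin n) (Fin n) (LaurentSeries R)) := rfl
    rw [h0, hDinv, hD, VAux.cUnits_coe, hcoe2]
    exact VAux.conj_entry _ _ _ i j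
  have hinv2 : (D⁻¹ * cUnits R n (pm * Lu⁻¹) * D)⁻¹ = D⁻¹ * cUnits R n (Lu * pm⁻¹) * D := by
    have h1 : cUnits R n (Lu * pm⁻¹) = (cUnits R n (pm * Lu⁻¹))⁻¹ := by
      rw [← map_inv]
      exact congrArg (cUnits R n) (by group)
    rw [h1]
    group
  have hx2invmat : ∀ i j, (((D⁻¹ * cUnits R n (pm * Lu⁻¹) * D)⁻¹
          : GL (Fin n) (LaurentSeries R)) : Matrix (Fin n) (Fin n) (LaurentSeries R)) i j
      = HahnSeries.single (-(d i) + d j)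
          ((VAux.levi d (pm : Matrix (Fin n) (Fin n) R) *
            ((pm⁻¹ : GL (Fin n) R) : Matrix (Fin n) (Fin n) R)) i j) := by
    intro i j
    rw [hinv2]
    have h0 : ((D⁻¹ * cUnits R n (Lu * pm⁻¹) * D : GL (Fin n) (LaurentSeries R))
          : Matrix (Fin n) (Fin n) (LaurentSeries R))
        = ((D⁻¹ : GL (Fin n) (LaurentSeries R)) : Matrix (Fin n) (Fin n) (LaurentSeries R)) *
          ((cUnits R n (Lu * pm⁻¹) : GL (Fin n) (LaurentSeries R))
            : Matrix (Fin n) (Fin n) (LaurentSeries R)) *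
          (D : Matrix (Fin n) (Fin n) (LaurentSeries R)) := rfl
    rw [h0, hDinv, hD, VAux.cUnits_coe, hcoe2']
    exact VAux.conj_entry _ _ _ i j
  have hN : ∀ i j, d j < d i → ((pm : Matrix (Fin n) (Fin n) R) *
      VAux.levi d ((pm⁻¹ : GL (Fin n) R) : Matrix (Fin n) (Fin n) R)) i j = 0 :=
    VAux.para_mul d _ _ hpm (VAux.levi_para d _)
  have hN' : ∀ i j, d j < d i → (VAux.levi d (pm : Matrix (Fin n) (Fin n) R) *
      ((pm⁻¹ : GL (Fin n) R) : Matrix (Fin n) (Fin n) R)) i j = 0 :=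
    VAux.para_mul d _ _ (VAux.levi_para d _) hpm'
  obtain ⟨k₂', hk₂eq, hk₂cc⟩ := VAux.lift_unit (D⁻¹ * cUnits R n (pm * Lu⁻¹) * D)
    (fun i j => by
      rw [hx2mat i j]
      refine VAux.single_mem _ _ ?_
      rcases lt_or_ge (d j) (d i) with h | h
      · exact Or.inr (hN i j h)
      · exact Or.inl (by omega))
    (fun i j => by
      rw [hx2invmat i j]
      refine VAux.single_mem _ _ ?_
      rcases lt_or_ge (d j) (d i) with h | h
      · exact Or.inr (hN' i j h)
      · exact Or.inl (by omega))
  have hNlevi : VAux.levi d ((pm : Matrix (Fin n) (Fin n) R) *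
      VAux.levi d ((pm⁻¹ : GL (Fin n) R) : Matrix (Fin n) (Fin n) R)) = 1 := by
    rw [VAux.levi_mul_levi_of_mul]
    exact hL1
  have hk₂red : redMat R n (k₂' : Matrix (Fin n) (Fin n) (PowerSeries R)) = 1 := by
    refine Matrix.ext fun i j => ?_
    rw [VAux.redMat_apply, hk₂cc i j, hx2mat i j, HahnSeries.coeff_single]
    have hlv2 := congrFun (congrFun hNlevi i) j
    rw [VAux.levi_apply] at hlv2
    by_cases hij : d i = d j
    · rw [if_pos (by omega : (0:ℤ) = -(d i) + d j), ← hlv2, if_pos hij]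
    · rw [if_neg (by omega : ¬ (0:ℤ) = -(d i) + d j), ← hlv2, if_neg hij]
  -- the upper-triangular conjugate
  have hxpmat : ∀ i j, ((D * cUnits R n pp⁻¹ * D⁻¹ : GL (Fin n) (LaurentSeries R))
        : Matrix (Fin n) (Fin n) (LaurentSeries R)) i j
      = HahnSeries.single (d i + -(d j))
          (((pp⁻¹ : GL (Fin n) R) : Matrix (Fin n) (Fin n) R) i j) := by
    intro i j
    have h0 : ((D * cUnits R n pp⁻¹ * D⁻¹ : GL (Fin n) (LaurentSeries R))
          : Matrix (Fin n) (Fin n) (LaurentSeries R))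
        = (D : Matrix (Fin n) (Fin n) (LaurentSeries R)) *
          ((cUnits R n pp⁻¹ : GL (Fin n) (LaurentSeries R))
            : Matrix (Fin n) (Fin n) (LaurentSeries R)) *
          ((D⁻¹ : GL (Fin n) (LaurentSeries R)) : Matrix (Fin n) (Fin n) (LaurentSeries R)) :=
      rfl
    rw [h0, hDinv, hD, VAux.cUnits_coe]
    exact VAux.conj_entry _ _ _ i j
  have hinvp : (D * cUnits R n pp⁻¹ * D⁻¹)⁻¹ = D * cUnits R n pp * D⁻¹ := by
    have h1 : cUnits R n pp = (cUnits R n pp⁻¹)⁻¹ := by rw [map_inv, inv_inv]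
    rw [h1]
    group
  have hxpinvmat : ∀ i j, (((D * cUnits R n pp⁻¹ * D⁻¹)⁻¹
          : GL (Fin n) (LaurentSeries R)) : Matrix (Fin n) (Fin n) (LaurentSeries R)) i j
      = HahnSeries.single (d i + -(d j)) ((pp : Matrix (Fin n) (Fin n) R) i j) := by
    intro i j
    rw [hinvp]
    have h0 : ((D * cUnits R n pp * D⁻¹ : GL (Fin n) (LaurentSeries R))
          : Matrix (Fin n) (Fin n) (LaurentSeries R))
        = (D : Matrix (Fin n) (Fin n) (LaurentSeries R)) *
          ((cUnits R n pp : GL (Fin n) (LaurentSeries R))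
            : Matrix (Fin n) (Fin n) (LaurentSeries R)) *
          ((D⁻¹ : GL (Fin n) (LaurentSeries R)) : Matrix (Fin n) (Fin n) (LaurentSeries R)) :=
      rfl
    rw [h0, hDinv, hD, VAux.cUnits_coe]
    exact VAux.conj_entry _ _ _ i j
  obtain ⟨Tp, hTpeq, hTpcc⟩ := VAux.lift_unit (D * cUnits R n pp⁻¹ * D⁻¹)
    (fun i j => by
      rw [hxpmat i j]
      refine VAux.single_mem _ _ ?_
      rcases lt_or_ge (d i) (d j) with h | h
      · exact Or.inr (hpp' i j h)
      · exact Or.inl (by omega))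
    (fun i j => by
      rw [hxpinvmat i j]
      refine VAux.single_mem _ _ ?_
      rcases lt_or_ge (d i) (d j) with h | h
      · exact Or.inr (hpp i j h)
      · exact Or.inl (by omega))
  have hTpred : redMat R n (Tp : Matrix (Fin n) (Fin n) (PowerSeries R))
      = VAux.levi d ((pp⁻¹ : GL (Fin n) R) : Matrix (Fin n) (Fin n) R) := by
    refine Matrix.ext fun i j => ?_
    rw [VAux.redMat_apply, hTpcc i j, hxpmat i j, HahnSeries.coeff_single, VAux.levi_apply]
    by_cases hij : d i = d j
    · rw [if_pos (by omega : (0:ℤ) = d i + -(d j)), if_pos hij]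
    · rw [if_neg (by omega : ¬ (0:ℤ) = d i + -(d j)), if_neg hij]
  have hTpU : VAux.rU R n Tp = Lp⁻¹ := Units.ext (by rw [VAux.rU_coe, hTpred]; rfl)
  have hk₂U : VAux.rU R n k₂' = 1 := Units.ext (by rw [VAux.rU_coe, hk₂red]; rfl)
  refine ⟨VAux.cPS R n (g₁⁻¹ * pm) * Tp * VAux.cPS R n (Lu * pm⁻¹ * g₁),
    VAux.cPS R n h₁⁻¹ * k₂' * VAux.cPS R n h₁, ?_, ?_, ?_⟩
  · have h1 : VAux.rU R n (VAux.cPS R n (g₁⁻¹ * pm) * Tp * VAux.cPS R n (Lu * pm⁻¹ * g₁))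
        = 1 := by
      rw [_root_.map_mul, _root_.map_mul, VAux.rU_cPS, VAux.rU_cPS, hTpU, hLuLp]
      group
    exact congrArg Units.val h1
  · have h1 : VAux.rU R n (VAux.cPS R n h₁⁻¹ * k₂' * VAux.cPS R n h₁) = 1 := by
      rw [_root_.map_mul, _root_.map_mul, VAux.rU_cPS, VAux.rU_cPS, hk₂U]
      group
    exact congrArg Units.val h1
  · rw [hg₂, hh₂]
    simp only [_root_.map_mul, map_inv, VAux.psUnits_cPS, hTpeq, hk₂eq, _root_.mul_inv_rev, inv_inv]
    group

set_option maxHeartbeats 1000000 in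
lemma VAux.backward (R : Type*) [CommRing R] (n : ℕ)
    (d : Fin n → ℤ)
    (D : GL (Fin n) (LaurentSeries R))
    (hD : (D : Matrix (Fin n) (Fin n) (LaurentSeries R)) =
      Matrix.diagonal fun i => HahnSeries.single (d i) (1 : R))
    (g₁ h₁ g₂ h₂ : GL (Fin n) R)
    (h : ∃ k₁ k₂ : GL (Fin n) (PowerSeries R),
        redMat R n (k₁ : Matrix (Fin n) (Fin n) (PowerSeries R)) = 1 ∧
        redMat R n (k₂ : Matrix (Fin n) (Fin n) (PowerSeries R)) = 1 ∧
        cUnits R n g₂⁻¹ * D * cUnits R n h₂ =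
          psUnits R n k₁ * (cUnits R n g₁⁻¹ * D * cUnits R n h₁) * psUnits R n k₂) :
    ∃ pm pp : GL (Fin n) R,
        (∀ i j : Fin n, d i > d j → (pm : Matrix (Fin n) (Fin n) R) i j = 0) ∧
        (∀ i j : Fin n, d i < d j → (pp : Matrix (Fin n) (Fin n) R) i j = 0) ∧
        (∀ i j : Fin n, d i = d j →
          (pm : Matrix (Fin n) (Fin n) R) i j = (pp : Matrix (Fin n) (Fin n) R) i j) ∧
        g₂ = pm⁻¹ * g₁ ∧ h₂ = pp⁻¹ * h₁ := by
  obtain ⟨k₁, k₂, hr₁, hr₂, heq⟩ := h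
  simp only [map_inv] at heq
  have hk₁U : VAux.rU R n k₁ = 1 := Units.ext (by rw [VAux.rU_coe, hr₁]; rfl)
  have hk₂U : VAux.rU R n k₂ = 1 := Units.ext (by rw [VAux.rU_coe, hr₂]; rfl)
  set w : GL (Fin n) (PowerSeries R) := VAux.cPS R n g₁ * k₁⁻¹ * VAux.cPS R n g₂⁻¹ with hw
  set z : GL (Fin n) (PowerSeries R) := VAux.cPS R n h₁ * k₂ * VAux.cPS R n h₂⁻¹ with hz
  have hpsw : psUnits R n w = cUnits R n g₁ * (psUnits R n k₁)⁻¹ * (cUnits R n g₂)⁻¹ := by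
    rw [hw]; simp only [_root_.map_mul, map_inv, VAux.psUnits_cPS]
  have hpsz : psUnits R n z = cUnits R n h₁ * psUnits R n k₂ * (cUnits R n h₂)⁻¹ := by
    rw [hz]; simp only [_root_.map_mul, map_inv, VAux.psUnits_cPS]
  have hconj : psUnits R n w = D * psUnits R n z * D⁻¹ := by
    rw [hpsw, hpsz]
    have key : (cUnits R n g₂)⁻¹
        = ((cUnits R n g₂)⁻¹ * D * cUnits R n h₂) * ((cUnits R n h₂)⁻¹ * D⁻¹) := by group
    rw [key, heq]
    group
  have hconj' : psUnits R n z = D⁻¹ * psUnits R n w * D := by rw [hconj]; group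
  have hwmat : ∀ i j, HahnSeries.ofPowerSeries ℤ R
        ((w : Matrix (Fin n) (Fin n) (PowerSeries R)) i j)
      = HahnSeries.single (d i) (1 : R) * HahnSeries.ofPowerSeries ℤ R
          ((z : Matrix (Fin n) (Fin n) (PowerSeries R)) i j)
        * HahnSeries.single (-(d j)) (1 : R) := by
    intro i j
    have h0 : ((psUnits R n w : GL (Fin n) (LaurentSeries R))
          : Matrix (Fin n) (Fin n) (LaurentSeries R))
        = (D : Matrix (Fin n) (Fin n) (LaurentSeries R)) *
          ((psUnits R n z : GL (Fin n) (LaurentSeries R))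
            : Matrix (Fin n) (Fin n) (LaurentSeries R)) *
          ((D⁻¹ : GL (Fin n) (LaurentSeries R)) : Matrix (Fin n) (Fin n) (LaurentSeries R)) := by
      rw [hconj]; rfl
    rw [VAux.psUnits_coe, VAux.psUnits_coe, hD, VAux.coe_D_inv d D hD] at h0
    have h1 := congrFun (congrFun h0 i) j
    rw [VAux.diag_sandwich] at h1
    exact h1
  have hzmat : ∀ i j, HahnSeries.ofPowerSeries ℤ R
        ((z : Matrix (Fin n) (Fin n) (PowerSeries R)) i j)
      = HahnSeries.single (-(d i)) (1 : R) * HahnSeries.ofPowerSeries ℤ R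
          ((w : Matrix (Fin n) (Fin n) (PowerSeries R)) i j)
        * HahnSeries.single (d j) (1 : R) := by
    intro i j
    have h0 : ((psUnits R n z : GL (Fin n) (LaurentSeries R))
          : Matrix (Fin n) (Fin n) (LaurentSeries R))
        = ((D⁻¹ : GL (Fin n) (LaurentSeries R)) : Matrix (Fin n) (Fin n) (LaurentSeries R)) *
          ((psUnits R n w : GL (Fin n) (LaurentSeries R))
            : Matrix (Fin n) (Fin n) (LaurentSeries R)) *
          (D : Matrix (Fin n) (Fin n) (LaurentSeries R)) := by
      rw [hconj']; rfl
    rw [VAux.psUnits_coe, VAux.psUnits_coe, hD, VAux.coe_D_inv d D hD] at h0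
    have h1 := congrFun (congrFun h0 i) j
    rw [VAux.diag_sandwich] at h1
    exact h1
  have hwred : VAux.rU R n w = g₁ * g₂⁻¹ := by
    rw [hw]
    simp only [_root_.map_mul, map_inv, VAux.rU_cPS, hk₁U, inv_one, mul_one, one_mul]
  have hzred : VAux.rU R n z = h₁ * h₂⁻¹ := by
    rw [hz]
    simp only [_root_.map_mul, map_inv, VAux.rU_cPS, hk₂U, mul_one, one_mul]
  have hwcc : ∀ i j, PowerSeries.constantCoeff (R := R)
        ((w : Matrix (Fin n) (Fin n) (PowerSeries R)) i j)
      = ((g₁ * g₂⁻¹ : GL (Fin n) R) : Matrix (Fin n) (Fin n) R) i j := by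
    intro i j
    have h0 := congrArg Units.val hwred
    exact congrFun (congrFun (congrArg (fun M => (M : Fin n → Fin n → R)) h0) i) j
  have hzcc : ∀ i j, PowerSeries.constantCoeff (R := R)
        ((z : Matrix (Fin n) (Fin n) (PowerSeries R)) i j)
      = ((h₁ * h₂⁻¹ : GL (Fin n) R) : Matrix (Fin n) (Fin n) R) i j := by
    intro i j
    have h0 := congrArg Units.val hzred
    exact congrFun (congrFun (congrArg (fun M => (M : Fin n → Fin n → R)) h0) i) j
  refine ⟨g₁ * g₂⁻¹, h₁ * h₂⁻¹, ?_, ?_, ?_, by group, by group⟩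
  · intro i j hij
    rw [← hwcc i j, ← VAux.coeff_zero_ofPS, hwmat i j, VAux.sandwich_coeff]
    exact VAux.coeff_ofPS_neg _ (by omega)
  · intro i j hij
    rw [← hzcc i j, ← VAux.coeff_zero_ofPS, hzmat i j, VAux.sandwich_coeff]
    exact VAux.coeff_ofPS_neg _ (by omega)
  · intro i j hij
    rw [← hwcc i j, ← VAux.coeff_zero_ofPS, hwmat i j, VAux.sandwich_coeff]
    have e0 : (0 : ℤ) - d i - -(d j) = 0 := by omega
    rw [e0, VAux.coeff_zero_ofPS, hzcc i j]

set_option maxHeartbeats 1000000 in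
lemma VAux.surj (R : Type*) [CommRing R] (n : ℕ)
    (d : Fin n → ℤ)
    (D : GL (Fin n) (LaurentSeries R))
    (x : GL (Fin n) (LaurentSeries R))
    (h : ∃ u v : GL (Fin n) (PowerSeries R), x = psUnits R n u * D * psUnits R n v) :
    ∃ g h : GL (Fin n) R, ∃ k₁ k₂ : GL (Fin n) (PowerSeries R),
        redMat R n (k₁ : Matrix (Fin n) (Fin n) (PowerSeries R)) = 1 ∧
        redMat R n (k₂ : Matrix (Fin n) (Fin n) (PowerSeries R)) = 1 ∧
        x = psUnits R n k₁ * (cUnits R n g⁻¹ * D * cUnits R n h) * psUnits R n k₂ := by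
  obtain ⟨u, v, hx⟩ := h
  refine ⟨(VAux.rU R n u)⁻¹, VAux.rU R n v,
    u * VAux.cPS R n (VAux.rU R n u)⁻¹, VAux.cPS R n (VAux.rU R n v)⁻¹ * v, ?_, ?_, ?_⟩
  · have : VAux.rU R n (u * VAux.cPS R n (VAux.rU R n u)⁻¹) = 1 := by
      rw [_root_.map_mul, VAux.rU_cPS, mul_inv_cancel]
    exact congrArg Units.val this
  · have : VAux.rU R n (VAux.cPS R n (VAux.rU R n v)⁻¹ * v) = 1 := by
      rw [_root_.map_mul, VAux.rU_cPS, inv_mul_cancel]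
    exact congrArg Units.val this
  · rw [hx, inv_inv, _root_.map_mul, _root_.map_mul, VAux.psUnits_cPS, VAux.psUnits_cPS, map_inv, map_inv]
    group

/-- the map `(g, h) ↦ K₁ · g⁻¹ D h · K₁` induces a well-defined bijection from
the set of orbits of the zip group `E(R)` on `GL_n(R) × GL_n(R)` onto the set of double
cosets `K₁ x K₁` with `x ∈ K D K`.  The first clause says two pairs are in the same
`E(R)`-orbit iff the corresponding elements lie in the same `K₁`-double coset
(well-definedness and injectivity); the second clause is surjectivity. -/
theorem viehmann_stmt6 (R : Type*) [CommRing R] (n : ℕ) (hn : 1 ≤ n)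
    (d : Fin n → ℤ) (hd : Antitone d)
    (D : GL (Fin n) (LaurentSeries R))
    (hD : (D : Matrix (Fin n) (Fin n) (LaurentSeries R)) =
      Matrix.diagonal fun i => HahnSeries.single (d i) (1 : R)) :
    (∀ g₁ h₁ g₂ h₂ : GL (Fin n) R,
      (∃ pm pp : GL (Fin n) R,
        (∀ i j : Fin n, d i > d j → (pm : Matrix (Fin n) (Fin n) R) i j = 0) ∧
        (∀ i j : Fin n, d i < d j → (pp : Matrix (Fin n) (Fin n) R) i j = 0) ∧
        (∀ i j : Fin n, d i = d j →
          (pm : Matrix (Fin n) (Fin n) R) i j = (pp : Matrix (Fin n) (Fin n) R) i j) ∧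
        g₂ = pm⁻¹ * g₁ ∧ h₂ = pp⁻¹ * h₁) ↔
      (∃ k₁ k₂ : GL (Fin n) (PowerSeries R),
        redMat R n (k₁ : Matrix (Fin n) (Fin n) (PowerSeries R)) = 1 ∧
        redMat R n (k₂ : Matrix (Fin n) (Fin n) (PowerSeries R)) = 1 ∧
        cUnits R n g₂⁻¹ * D * cUnits R n h₂ =
          psUnits R n k₁ * (cUnits R n g₁⁻¹ * D * cUnits R n h₁) * psUnits R n k₂)) ∧
    (∀ x : GL (Fin n) (LaurentSeries R),
      (∃ u v : GL (Fin n) (PowerSeries R), x = psUnits R n u * D * psUnits R n v) →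
      ∃ g h : GL (Fin n) R, ∃ k₁ k₂ : GL (Fin n) (PowerSeries R),
        redMat R n (k₁ : Matrix (Fin n) (Fin n) (PowerSeries R)) = 1 ∧
        redMat R n (k₂ : Matrix (Fin n) (Fin n) (PowerSeries R)) = 1 ∧
        x = psUnits R n k₁ * (cUnits R n g⁻¹ * D * cUnits R n h) * psUnits R n k₂) := by
  constructor
  · intro g₁ h₁ g₂ h₂
    exact ⟨VAux.forward R n d D hD g₁ h₁ g₂ h₂, VAux.backward R n d D hD g₁ h₁ g₂ h₂⟩
  · intro x hx
    exact VAux.surj R n d D x hx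
end
end

section
/- With notation as above (R a commutative ring, d_1 ≥ … ≥ d_n, D = diag(t^{d_i}), K₁ = ker(GL_n(R[[t]]) → GL_n(R))), let m ≥ 1 be a positive integer and set D^m = diag(t^{m·d_1}, …, t^{m·d_n}). Then for all g_1, g_2, h_1, h_2 ∈ GL_n(R): K₁ g_1⁻¹ D h_1 K₁ = K₁ g_2⁻¹ D h_2 K₁ if and only if K₁ g_1⁻¹ D^m h_1 K₁ = K₁ g_2⁻¹ D^m h_2 K₁. In other words, the assignment g⁻¹ D h ↦ g⁻¹ D^m h gives a well-defined bijection of double coset spaces K₁\(GL_n(R) D GL_n(R) K₁)/K₁ ≅ K₁\(GL_n(R) D^m GL_n(R) K₁)/K₁. -/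
open Matrix

noncomputable section

namespace V7

variable {R : Type*} [CommRing R] {n : ℕ}

/-- constant inclusion `GL_n(R) → GL_n(R[[t]])`. -/
def cPS (R : Type*) [CommRing R] (n : ℕ) :
    GL (Fin n) R →* GL (Fin n) (PowerSeries R) :=
  Units.map ((PowerSeries.C (R := R)).mapMatrix).toMonoidHom

/-- reduction `GL_n(R[[t]]) → GL_n(R)`. -/
def redU (R : Type*) [CommRing R] (n : ℕ) :
    GL (Fin n) (PowerSeries R) →* GL (Fin n) R :=
  Units.map ((PowerSeries.constantCoeff (R := R)).mapMatrix).toMonoidHom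

lemma psUnits_val (u : GL (Fin n) (PowerSeries R)) :
    (psUnits R n u : Matrix (Fin n) (Fin n) (LaurentSeries R)) =
      (u : Matrix (Fin n) (Fin n) (PowerSeries R)).map (HahnSeries.ofPowerSeries ℤ R) := rfl

lemma redU_val (u : GL (Fin n) (PowerSeries R)) :
    (redU R n u : Matrix (Fin n) (Fin n) R) =
      redMat R n (u : Matrix (Fin n) (Fin n) (PowerSeries R)) := rfl

lemma redMat_eq_one_iff (k : GL (Fin n) (PowerSeries R)) :
    redMat R n (k : Matrix (Fin n) (Fin n) (PowerSeries R)) = 1 ↔ redU R n k = 1 := by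
  rw [Units.ext_iff, ← redU_val, Units.val_one]

lemma psUnits_cPS (g : GL (Fin n) R) : psUnits R n (cPS R n g) = cUnits R n g := by
  ext i j : 3
  rfl

lemma redU_cPS (g : GL (Fin n) R) : redU R n (cPS R n g) = g := by
  ext i j : 3
  simp [redU, cPS, redMat]

lemma coeff_single_mul (a : ℤ) (x : LaurentSeries R) (z : ℤ) :
    (HahnSeries.single a (1 : R) * x).coeff z = x.coeff (z - a) := by
  have h := HahnSeries.coeff_single_mul_add (b := a) (a := z - a) (r := (1 : R)) (x := x)
  rw [sub_add_cancel, one_mul] at h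
  exact h

lemma coeff_mul_single (a : ℤ) (x : LaurentSeries R) (z : ℤ) :
    (x * HahnSeries.single a (1 : R)).coeff z = x.coeff (z - a) := by
  have h := HahnSeries.coeff_mul_single_add (b := a) (a := z - a) (r := (1 : R)) (x := x)
  rw [sub_add_cancel, mul_one] at h
  exact h

lemma ofPS_coeff_neg {x : PowerSeries R} {z : ℤ} (hz : z < 0) :
    (HahnSeries.ofPowerSeries ℤ R x).coeff z = 0 := by
  rw [HahnSeries.ofPowerSeries_apply]
  apply HahnSeries.embDomain_notin_range
  rintro ⟨k, hk⟩
  simp only [Function.Embedding.coeFn_mk, RelEmbedding.coe_mk,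
    OrderEmbedding.coe_ofStrictMono, Nat.castOrderEmbedding_apply] at hk
  omega

lemma ofPS_coeff_zero (x : PowerSeries R) :
    (HahnSeries.ofPowerSeries ℤ R x).coeff (0 : ℤ) = PowerSeries.constantCoeff (R := R) x := by
  have := HahnSeries.ofPowerSeries_apply_coeff (Γ := ℤ) x 0
  simpa using this

lemma C_eq_single (r : R) :
    (HahnSeries.C r : HahnSeries ℤ R) = HahnSeries.single (0 : ℤ) r := rfl

/-- Step 1: unfold the double-coset condition to the existence of `u, w ∈ GL_n(R[[t]])`
with prescribed reductions such that `D u = w D`. -/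
lemma step1 (D : GL (Fin n) (LaurentSeries R)) (g₁ g₂ h₁ h₂ : GL (Fin n) R) :
    (∃ k₁ k₂ : GL (Fin n) (PowerSeries R),
      redMat R n (k₁ : Matrix (Fin n) (Fin n) (PowerSeries R)) = 1 ∧
      redMat R n (k₂ : Matrix (Fin n) (Fin n) (PowerSeries R)) = 1 ∧
      cUnits R n g₂⁻¹ * D * cUnits R n h₂ =
        psUnits R n k₁ * (cUnits R n g₁⁻¹ * D * cUnits R n h₁) * psUnits R n k₂) ↔
    (∃ u w : GL (Fin n) (PowerSeries R),
      redU R n u = h₂ * h₁⁻¹ ∧ redU R n w = g₂ * g₁⁻¹ ∧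
      D * psUnits R n u = psUnits R n w * D) := by
  constructor
  · rintro ⟨k₁, k₂, hk₁, hk₂, heq⟩
    rw [redMat_eq_one_iff] at hk₁ hk₂
    refine ⟨cPS R n h₂ * k₂⁻¹ * (cPS R n h₁)⁻¹, cPS R n g₂ * k₁ * (cPS R n g₁)⁻¹, ?_, ?_, ?_⟩
    · simp [_root_.map_mul, map_inv, redU_cPS, hk₂]
    · simp [_root_.map_mul, map_inv, redU_cPS, hk₁]
    · simp only [_root_.map_mul, map_inv, psUnits_cPS]
      simp only [map_inv] at heq
      calc D * (cUnits R n h₂ * (psUnits R n k₂)⁻¹ * (cUnits R n h₁)⁻¹)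
          = cUnits R n g₂ * ((cUnits R n g₂)⁻¹ * D * cUnits R n h₂) *
              ((psUnits R n k₂)⁻¹ * (cUnits R n h₁)⁻¹) := by group
        _ = cUnits R n g₂ * (psUnits R n k₁ *
              ((cUnits R n g₁)⁻¹ * D * cUnits R n h₁) * psUnits R n k₂) *
              ((psUnits R n k₂)⁻¹ * (cUnits R n h₁)⁻¹) := by rw [heq]
        _ = cUnits R n g₂ * psUnits R n k₁ * (cUnits R n g₁)⁻¹ * D := by group
  · rintro ⟨u, w, hu, hw, huw⟩
    refine ⟨(cPS R n g₂)⁻¹ * w * cPS R n g₁, (cPS R n h₁)⁻¹ * u⁻¹ * cPS R n h₂, ?_, ?_, ?_⟩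
    · rw [redMat_eq_one_iff]
      simp [_root_.map_mul, map_inv, redU_cPS, hw]
    · rw [redMat_eq_one_iff]
      simp [_root_.map_mul, map_inv, redU_cPS, hu]
    · simp only [_root_.map_mul, map_inv, psUnits_cPS]
      calc (cUnits R n g₂)⁻¹ * D * cUnits R n h₂
          = (cUnits R n g₂)⁻¹ * (D * psUnits R n u) * (psUnits R n u)⁻¹ * cUnits R n h₂ := by
            group
        _ = (cUnits R n g₂)⁻¹ * (psUnits R n w * D) * (psUnits R n u)⁻¹ * cUnits R n h₂ := by
            rw [huw]
        _ = (cUnits R n g₂)⁻¹ * psUnits R n w * cUnits R n g₁ *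
              ((cUnits R n g₁)⁻¹ * D * cUnits R n h₁) *
              ((cUnits R n h₁)⁻¹ * (psUnits R n u)⁻¹ * cUnits R n h₂) := by group

/-- Step 2: entrywise characterization of `D u = w D`. -/
lemma step2 (d : Fin n → ℤ) (D : GL (Fin n) (LaurentSeries R))
    (hD : (D : Matrix (Fin n) (Fin n) (LaurentSeries R)) =
      Matrix.diagonal fun i => HahnSeries.single (d i) (1 : R))
    (u w : GL (Fin n) (PowerSeries R)) :
    D * psUnits R n u = psUnits R n w * D ↔
    ∀ i j, HahnSeries.single (d i) (1 : R) *
        HahnSeries.ofPowerSeries ℤ R ((u : Matrix (Fin n) (Fin n) (PowerSeries R)) i j) =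
      HahnSeries.ofPowerSeries ℤ R ((w : Matrix (Fin n) (Fin n) (PowerSeries R)) i j) *
        HahnSeries.single (d j) (1 : R) := by
  rw [Units.ext_iff, Units.val_mul, Units.val_mul, psUnits_val, psUnits_val, hD,
    ← Matrix.ext_iff]
  constructor
  · intro h i j
    have := h i j
    rwa [Matrix.diagonal_mul, Matrix.mul_diagonal, Matrix.map_apply, Matrix.map_apply] at this
  · intro h i j
    rw [Matrix.diagonal_mul, Matrix.mul_diagonal, Matrix.map_apply, Matrix.map_apply]
    exact h i j

/-- The purely combinatorial condition. -/
def cond (d : Fin n → ℤ) (A B : GL (Fin n) R) : Prop :=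
  ∀ i j, (d i < d j → (B : Matrix (Fin n) (Fin n) R) i j = 0) ∧
    (d j < d i → (A : Matrix (Fin n) (Fin n) R) i j = 0) ∧
    (d i = d j → (A : Matrix (Fin n) (Fin n) R) i j = (B : Matrix (Fin n) (Fin n) R) i j)

/-- Step 3: existence of `u, w` is equivalent to the combinatorial condition. -/
lemma step3 (d : Fin n → ℤ) (D : GL (Fin n) (LaurentSeries R))
    (hD : (D : Matrix (Fin n) (Fin n) (LaurentSeries R)) =
      Matrix.diagonal fun i => HahnSeries.single (d i) (1 : R))
    (A B : GL (Fin n) R) :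
    (∃ u w : GL (Fin n) (PowerSeries R),
      redU R n u = B ∧ redU R n w = A ∧
      D * psUnits R n u = psUnits R n w * D) ↔ cond d A B := by
  constructor
  · rintro ⟨u, w, hu, hw, huw⟩
    rw [step2 d D hD] at huw
    intro i j
    have hBij : PowerSeries.constantCoeff (R := R) ((u : Matrix (Fin n) (Fin n) (PowerSeries R)) i j) =
        (B : Matrix (Fin n) (Fin n) R) i j := by
      rw [← hu]; rfl
    have hAij : PowerSeries.constantCoeff (R := R) ((w : Matrix (Fin n) (Fin n) (PowerSeries R)) i j) =
        (A : Matrix (Fin n) (Fin n) R) i j := by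
      rw [← hw]; rfl
    have hdi := congrArg (fun x : LaurentSeries R => x.coeff (d i)) (huw i j)
    have hdj := congrArg (fun x : LaurentSeries R => x.coeff (d j)) (huw i j)
    simp only [coeff_single_mul, coeff_mul_single, sub_self, ofPS_coeff_zero] at hdi hdj
    refine ⟨fun hlt => ?_, fun hlt => ?_, fun heq => ?_⟩
    · rw [hBij, ofPS_coeff_neg (show d i - d j < 0 by omega)] at hdi
      exact hdi
    · rw [hAij, ofPS_coeff_neg (show d j - d i < 0 by omega)] at hdj
      exact hdj.symm
    · rw [show d i - d j = 0 by omega, ofPS_coeff_zero, hAij, hBij] at hdi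
      exact hdi.symm
  · intro hc
    set U : Matrix (Fin n) (Fin n) (PowerSeries R) := Matrix.of fun i j =>
      if d i < d j then PowerSeries.C (R := R) ((A : Matrix (Fin n) (Fin n) R) i j) *
        PowerSeries.X ^ (d j - d i).toNat
      else PowerSeries.C (R := R) ((B : Matrix (Fin n) (Fin n) R) i j) with hU
    set W : Matrix (Fin n) (Fin n) (PowerSeries R) := Matrix.of fun i j =>
      if d i < d j then PowerSeries.C (R := R) ((A : Matrix (Fin n) (Fin n) R) i j)
      else PowerSeries.C (R := R) ((B : Matrix (Fin n) (Fin n) R) i j) *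
        PowerSeries.X ^ (d i - d j).toNat with hW
    have hredU : redMat R n U = (B : Matrix (Fin n) (Fin n) R) := by
      ext i j
      by_cases hij : d i < d j
      · simp only [redMat, RingHom.mapMatrix_apply, Matrix.map_apply, hU, Matrix.of_apply,
          if_pos hij, _root_.map_mul, PowerSeries.constantCoeff_C, _root_.map_pow,
          PowerSeries.constantCoeff_X]
        rw [zero_pow (show (d j - d i).toNat ≠ 0 by omega), mul_zero, (hc i j).1 hij]
      · simp only [redMat, RingHom.mapMatrix_apply, Matrix.map_apply, hU, Matrix.of_apply,
          if_neg hij, PowerSeries.constantCoeff_C]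
    have hredW : redMat R n W = (A : Matrix (Fin n) (Fin n) R) := by
      ext i j
      by_cases hij : d i < d j
      · simp only [redMat, RingHom.mapMatrix_apply, Matrix.map_apply, hW, Matrix.of_apply,
          if_pos hij, PowerSeries.constantCoeff_C]
      · simp only [redMat, RingHom.mapMatrix_apply, Matrix.map_apply, hW, Matrix.of_apply,
          if_neg hij, _root_.map_mul, PowerSeries.constantCoeff_C, _root_.map_pow,
          PowerSeries.constantCoeff_X]
        rcases lt_or_eq_of_le (not_lt.mp hij) with hlt | heq
        · rw [zero_pow (show (d i - d j).toNat ≠ 0 by omega), mul_zero, (hc i j).2.1 hlt]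
        · rw [show (d i - d j).toNat = 0 by omega, pow_zero, mul_one,
            (hc i j).2.2 heq.symm]
    have hUu : IsUnit U := by
      rw [Matrix.isUnit_iff_isUnit_det, PowerSeries.isUnit_iff_constantCoeff,
        RingHom.map_det]
      exact hredU ▸ (Matrix.isUnit_iff_isUnit_det _).mp B.isUnit
    have hWu : IsUnit W := by
      rw [Matrix.isUnit_iff_isUnit_det, PowerSeries.isUnit_iff_constantCoeff,
        RingHom.map_det]
      exact hredW ▸ (Matrix.isUnit_iff_isUnit_det _).mp A.isUnit
    refine ⟨hUu.unit, hWu.unit, ?_, ?_, ?_⟩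
    · ext1; rw [redU_val, hUu.unit_spec, hredU]
    · ext1; rw [redU_val, hWu.unit_spec, hredW]
    · rw [step2 d D hD]
      intro i j
      rw [hUu.unit_spec, hWu.unit_spec]
      by_cases hij : d i < d j
      · rw [hU, hW]
        simp only [Matrix.of_apply, if_pos hij, _root_.map_mul, HahnSeries.ofPowerSeries_C,
          HahnSeries.ofPowerSeries_X_pow, C_eq_single]
        rw [HahnSeries.single_mul_single, HahnSeries.single_mul_single,
          HahnSeries.single_mul_single,
          show d i + ((0 : ℤ) + (((d j - d i).toNat : ℕ) : ℤ)) = 0 + d j by omega,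
          one_mul]
      · rw [hU, hW]
        simp only [Matrix.of_apply, if_neg hij, _root_.map_mul, HahnSeries.ofPowerSeries_C,
          HahnSeries.ofPowerSeries_X_pow, C_eq_single]
        rw [HahnSeries.single_mul_single, HahnSeries.single_mul_single,
          HahnSeries.single_mul_single,
          show d i + (0 : ℤ) = 0 + (((d i - d j).toNat : ℕ) : ℤ) + d j by omega,
          one_mul, mul_one, mul_one]

end V7

/-- with `D = diag(t^{d_i})` and `Dm = diag(t^{m d_i})` for `m ≥ 1`,
`K₁ g₁⁻¹ D h₁ K₁ = K₁ g₂⁻¹ D h₂ K₁` iff `K₁ g₁⁻¹ Dm h₁ K₁ = K₁ g₂⁻¹ Dm h₂ K₁`;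
i.e. `g⁻¹ D h ↦ g⁻¹ Dm h` is a well-defined bijection of double coset spaces. -/
theorem viehmann_stmt7 (R : Type*) [CommRing R] (n : ℕ) (hn : 1 ≤ n)
    (d : Fin n → ℤ) (hd : Antitone d) (m : ℕ) (hm : 1 ≤ m)
    (D Dm : GL (Fin n) (LaurentSeries R))
    (hD : (D : Matrix (Fin n) (Fin n) (LaurentSeries R)) =
      Matrix.diagonal fun i => HahnSeries.single (d i) (1 : R))
    (hDm : (Dm : Matrix (Fin n) (Fin n) (LaurentSeries R)) =
      Matrix.diagonal fun i => HahnSeries.single ((m : ℤ) * d i) (1 : R))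
    (g₁ g₂ h₁ h₂ : GL (Fin n) R) :
    (∃ k₁ k₂ : GL (Fin n) (PowerSeries R),
      redMat R n (k₁ : Matrix (Fin n) (Fin n) (PowerSeries R)) = 1 ∧
      redMat R n (k₂ : Matrix (Fin n) (Fin n) (PowerSeries R)) = 1 ∧
      cUnits R n g₂⁻¹ * D * cUnits R n h₂ =
        psUnits R n k₁ * (cUnits R n g₁⁻¹ * D * cUnits R n h₁) * psUnits R n k₂) ↔
    (∃ k₁ k₂ : GL (Fin n) (PowerSeries R),
      redMat R n (k₁ : Matrix (Fin n) (Fin n) (PowerSeries R)) = 1 ∧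
      redMat R n (k₂ : Matrix (Fin n) (Fin n) (PowerSeries R)) = 1 ∧
      cUnits R n g₂⁻¹ * Dm * cUnits R n h₂ =
        psUnits R n k₁ * (cUnits R n g₁⁻¹ * Dm * cUnits R n h₁) * psUnits R n k₂) := by
  have hm0 : (0 : ℤ) < (m : ℤ) := by exact_mod_cast hm
  rw [V7.step1 D g₁ g₂ h₁ h₂, V7.step1 Dm g₁ g₂ h₁ h₂,
    V7.step3 d D hD (g₂ * g₁⁻¹) (h₂ * h₁⁻¹),
    V7.step3 (fun i => (m : ℤ) * d i) Dm hDm (g₂ * g₁⁻¹) (h₂ * h₁⁻¹)]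
  constructor
  · intro h i j
    obtain ⟨p, q, r⟩ := h i j
    exact ⟨fun hlt => p (lt_of_mul_lt_mul_left (by simpa using hlt) (le_of_lt hm0)),
      fun hlt => q (lt_of_mul_lt_mul_left (by simpa using hlt) (le_of_lt hm0)),
      fun he => r (mul_left_cancel₀ (ne_of_gt hm0) (by simpa using he))⟩
  · intro h i j
    obtain ⟨p, q, r⟩ := h i j
    exact ⟨fun hlt => p (by simpa using mul_lt_mul_of_pos_left hlt hm0),
      fun hlt => q (by simpa using mul_lt_mul_of_pos_left hlt hm0),
      fun he => r (by simp only []; rw [he])⟩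

end
end
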